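/- (Objective gap for the entropy-regularized actor objective.) Let π be a policy with π(s,a) > 0 for all (s,a) and let ℓ ∈ ℝ^{S×A} be the vector ℓ(s,a) := log π(s,a). Then for every q ∈ ℝ^{S×A}, d(π)ᵀ (r − ℓ) − (1−γ) μ0ᵀ Π(π) (q − ℓ) = d(π)ᵀ δ_E, where δ_E := r + γ P Π(π) (q − ℓ) − q is the entropy-adjusted Bellman residual of the critic q. -/
import Mathlib


open Matrix

noncomputable section

variable {S A : Type*} [Fintype S] [Fintype A] [DecidableEq S] [DecidableEq A]
  [Nonempty S] [Nonempty A]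

/-- A policy: nonnegative entries, and for each state the action probabilities sum to one. -/
def IsPolicy (x : S × A → ℝ) : Prop :=
  (∀ p, 0 ≤ x p) ∧ ∀ s : S, ∑ a : A, x (s, a) = 1

/-- A row-stochastic transition matrix. -/
def IsStochasticMat (P : Matrix (S × A) S ℝ) : Prop :=
  (∀ p s, 0 ≤ P p s) ∧ ∀ p, ∑ s : S, P p s = 1

/-- A probability vector on states. -/
def IsProbVec (μ : S → ℝ) : Prop :=
  (∀ s, 0 ≤ μ s) ∧ ∑ s : S, μ s = 1

/-- The block policy matrix `Π(x) ∈ ℝ^{S × (S×A)}`. -/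
def piMat (x : S × A → ℝ) : Matrix S (S × A) ℝ :=
  Matrix.of fun s p => if p.1 = s then x p else 0

/-- The action-marginalization matrix `Ξ ∈ ℝ^{S × (S×A)}`. -/
def xiMat : Matrix S (S × A) ℝ :=
  Matrix.of fun s p => if p.1 = s then (1 : ℝ) else 0

/-- `Ψ(x) = I - γ P Π(x)`. -/
def psiMat (P : Matrix (S × A) S ℝ) (γ : ℝ) (x : S × A → ℝ) :
    Matrix (S × A) (S × A) ℝ :=
  1 - γ • (P * piMat x)

/-- The discounted state-action occupancy `d(x) = (1-γ)(Ψ(x)ᵀ)⁻¹ Π(x)ᵀ μ0`. -/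
def dOcc (P : Matrix (S × A) S ℝ) (γ : ℝ) (μ0 : S → ℝ) (x : S × A → ℝ) :
    S × A → ℝ :=
  (1 - γ) • (((psiMat P γ x)ᵀ)⁻¹ *ᵥ ((piMat x)ᵀ *ᵥ μ0))

lemma psiMat_det_isUnit
    (P : Matrix (S × A) S ℝ) (hP : IsStochasticMat P)
    (γ : ℝ) (hγ0 : 0 ≤ γ) (hγ1 : γ < 1)
    (x : S × A → ℝ) (hx : IsPolicy x) :
    IsUnit (psiMat P γ x).det := by
  set M := P * piMat x with hM
  have hMentry : ∀ p q : S × A, M p q = P p q.1 * x q := by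
    intro p q
    simp [hM, Matrix.mul_apply, piMat, mul_ite, mul_zero]
  have hMnn : ∀ p q : S × A, 0 ≤ M p q := by
    intro p q
    rw [hMentry]
    exact mul_nonneg (hP.1 _ _) (hx.1 _)
  have hMrow : ∀ p : S × A, ∑ q : S × A, M p q = 1 := by
    intro p
    simp only [hMentry]
    rw [Fintype.sum_prod_type]
    have : ∀ s : S, ∑ a : A, P p s * x (s, a) = P p s := by
      intro s
      rw [← Finset.mul_sum]
      simp [hx.2 s]
    simp only [this]
    exact hP.2 p
  rw [isUnit_iff_ne_zero]
  intro hdet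
  obtain ⟨v, hv, hMv⟩ := Matrix.exists_mulVec_eq_zero_iff.mpr hdet
  have hveq0 : v = γ • (M *ᵥ v) := by
    have h := hMv
    rw [psiMat, Matrix.sub_mulVec, Matrix.one_mulVec, Matrix.smul_mulVec,
      sub_eq_zero] at h
    exact h
  have hveq : ∀ p, v p = γ * ∑ q, M p q * v q := by
    intro p
    have := congrFun hveq0 p
    simpa [Matrix.mulVec, dotProduct] using this
  obtain ⟨p, -, hp⟩ := Finset.exists_max_image Finset.univ (fun p => |v p|) Finset.univ_nonempty
  have hbound : |v p| ≤ γ * |v p| := by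
    calc |v p| = γ * |∑ q, M p q * v q| := by
          rw [hveq p, abs_mul, abs_of_nonneg hγ0]
      _ ≤ γ * ∑ q, M p q * |v p| := by
          apply mul_le_mul_of_nonneg_left _ hγ0
          calc |∑ q, M p q * v q| ≤ ∑ q, |M p q * v q| := Finset.abs_sum_le_sum_abs _ _
            _ ≤ ∑ q, M p q * |v p| := by
                apply Finset.sum_le_sum
                intro q _
                rw [abs_mul, abs_of_nonneg (hMnn p q)]
                exact mul_le_mul_of_nonneg_left (hp q (Finset.mem_univ q)) (hMnn p q)
      _ = γ * |v p| := by rw [← Finset.sum_mul, hMrow p, one_mul]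
  have hvp : |v p| = 0 := by nlinarith [abs_nonneg (v p)]
  apply hv
  funext q
  have := hp q (Finset.mem_univ q)
  rw [hvp] at this
  simpa using le_antisymm this (abs_nonneg (v q))

/-- objective gap for the entropy-regularized actor objective:
`d(π)ᵀ(r - ℓ) - (1-γ)μ0ᵀΠ(π)(q - ℓ) = d(π)ᵀ δ_E` where
`δ_E = r + γPΠ(π)(q - ℓ) - q`. -/
theorem soft_objective_gap
    (P : Matrix (S × A) S ℝ) (hP : IsStochasticMat P)
    (γ : ℝ) (hγ0 : 0 ≤ γ) (hγ1 : γ < 1)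
    (r : S × A → ℝ) (μ0 : S → ℝ) (hμ0 : IsProbVec μ0)
    (x : S × A → ℝ) (hx : IsPolicy x) (hxpos : ∀ p : S × A, 0 < x p) :
    ∀ q : S × A → ℝ,
      dOcc P γ μ0 x ⬝ᵥ (r - fun p => Real.log (x p))
        - (1 - γ) * (μ0 ⬝ᵥ (piMat x *ᵥ (q - fun p => Real.log (x p))))
      = dOcc P γ μ0 x ⬝ᵥ
          (r + γ • ((P * piMat x) *ᵥ (q - fun p => Real.log (x p))) - q) := by
  intro q
  set v : S × A → ℝ := q - fun p => Real.log (x p) with hvdef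
  have hunit : IsUnit ((psiMat P γ x)ᵀ).det := by
    rw [Matrix.det_transpose]
    exact psiMat_det_isUnit P hP γ hγ0 hγ1 x hx
  have key : dOcc P γ μ0 x ⬝ᵥ (v - γ • ((P * piMat x) *ᵥ v))
      = (1 - γ) * (μ0 ⬝ᵥ (piMat x *ᵥ v)) := by
    have h1 : v - γ • ((P * piMat x) *ᵥ v) = psiMat P γ x *ᵥ v := by
      simp [psiMat, Matrix.sub_mulVec, Matrix.one_mulVec, Matrix.smul_mulVec]
    rw [h1, Matrix.dotProduct_mulVec, ← Matrix.mulVec_transpose]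
    have h2 : (psiMat P γ x)ᵀ *ᵥ dOcc P γ μ0 x = (1 - γ) • ((piMat x)ᵀ *ᵥ μ0) := by
      rw [dOcc, Matrix.mulVec_smul, Matrix.mulVec_mulVec, Matrix.mul_nonsing_inv _ hunit,
        Matrix.one_mulVec]
    rw [h2, smul_dotProduct, smul_eq_mul, Matrix.mulVec_transpose,
      ← Matrix.dotProduct_mulVec]
  have hsplit : (r + γ • ((P * piMat x) *ᵥ v) - q)
      = (r - fun p => Real.log (x p)) - (v - γ • ((P * piMat x) *ᵥ v)) := by
    funext p
    simp [hvdef]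
    ring
  rw [hsplit, dotProduct_sub (dOcc P γ μ0 x) (r - fun p => Real.log (x p))
    (v - γ • ((P * piMat x) *ᵥ v)), key]
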